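/- For every integer t ≥ 1, the sum over all t-element subsets S of the nonnegative integers of 2^(-∑_{i∈S} i) equals 2^t / ∏_{i=1}^{t} (2^i - 1). -/

import Mathlib

open Finset

def shiftEquiv (t : ℕ) :
    ℕ × {T : Finset ℕ // T.card = t} ≃ {S : Finset ℕ // S.card = t + 1} where
  toFun p := ⟨insert p.1 (p.2.1.image (· + (p.1 + 1))), by
    have hnotmem : p.1 ∉ p.2.1.image (· + (p.1 + 1)) := by
      simp only [mem_image]
      rintro ⟨x, hx, hxe⟩
      omega
    rw [card_insert_of_notMem hnotmem,
      card_image_of_injective _ (add_left_injective _), p.2.2]⟩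
  invFun S :=
    have hne : S.1.Nonempty := card_pos.mp (by rw [S.2]; omega)
    let m := S.1.min' hne
    (m, ⟨(S.1.erase m).image (· - (m + 1)), by
      have hinj : Set.InjOn (· - (m + 1)) (S.1.erase m) := by
        intro x hx y hy hxy
        have hx' := S.1.min'_le x (mem_of_mem_erase hx)
        have hy' := S.1.min'_le y (mem_of_mem_erase hy)
        have : x ≠ m := ne_of_mem_erase hx
        have : y ≠ m := ne_of_mem_erase hy
        simp only at hxy
        omega
      rw [card_image_of_injOn hinj, card_erase_of_mem (S.1.min'_mem hne), S.2]
      omega⟩)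
  left_inv p := by
    obtain ⟨m, T, hT⟩ := p
    have hnotmem : m ∉ T.image (· + (m + 1)) := by
      simp only [mem_image]; rintro ⟨x, hx, hxe⟩; omega
    have hmin : (insert m (T.image (· + (m + 1)))).min'
        (insert_nonempty _ _) = m := by
      apply le_antisymm (min'_le _ _ (mem_insert_self _ _))
      apply le_min'
      intro y hy
      rcases mem_insert.mp hy with h | h
      · omega
      · simp only [mem_image] at h; obtain ⟨x, hx, hxe⟩ := h; omega
    simp only [Prod.mk.injEq, hmin]
    refine ⟨trivial, Subtype.ext ?_⟩
    simp only [hmin, erase_insert hnotmem, image_image]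
    rw [show ((fun x => x - (m + 1)) ∘ (· + (m + 1))) = id by funext x; simp]
    exact image_id
  right_inv S := by
    obtain ⟨S, hS⟩ := S
    have hne : S.Nonempty := card_pos.mp (by rw [hS]; omega)
    set m := S.min' hne with hm
    refine Subtype.ext ?_
    simp only [image_image]
    have h1 : (S.erase m).image ((· + (m + 1)) ∘ (· - (m + 1))) = S.erase m := by
      rw [image_congr (g := id), image_id]
      intro x hx
      have hx1 := S.min'_le x (mem_of_mem_erase hx)
      have hx2 : x ≠ m := ne_of_mem_erase hx
      simp only [Function.comp_apply, id_eq]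
      omega
    rw [h1, insert_erase (S.min'_mem hne)]

lemma shiftEquiv_sum (t m : ℕ) (T : {T : Finset ℕ // T.card = t}) :
    ∑ i ∈ ((shiftEquiv t (m, T)).1 : Finset ℕ), i
      = (m + t * (m + 1)) + ∑ i ∈ T.1, i := by
  have hnotmem : m ∉ T.1.image (· + (m + 1)) := by
    simp only [mem_image]; rintro ⟨x, hx, hxe⟩; omega
  show ∑ i ∈ insert m (T.1.image (· + (m + 1))), i = _
  rw [sum_insert hnotmem, sum_image (fun x _ y _ => by omega)]
  rw [Finset.sum_add_distrib, sum_const, T.2]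
  ring

lemma key (t : ℕ) :
    Summable (fun S : {S : Finset ℕ // S.card = t} =>
      (2 : ℝ) ^ (-((∑ i ∈ S.1, i : ℕ) : ℤ)))
    ∧ ∑' S : {S : Finset ℕ // S.card = t}, (2 : ℝ) ^ (-((∑ i ∈ S.1, i : ℕ) : ℤ))
      = 2 ^ t / ∏ i ∈ Finset.Icc 1 t, ((2 : ℝ) ^ i - 1) := by
  induction t with
  | zero =>
    letI : Unique {S : Finset ℕ // S.card = 0} :=
      ⟨⟨⟨∅, rfl⟩⟩, fun S => Subtype.ext (card_eq_zero.mp S.2)⟩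
    constructor
    · exact .of_finite
    · rw [tsum_eq_single default (fun b hb => absurd (Subsingleton.elim b default) hb)]
      have hd : (default : {S : Finset ℕ // S.card = 0}).1 = ∅ := rfl
      simp [hd]
  | succ t ih =>
    obtain ⟨hs, hv⟩ := ih
    set F := fun S : {S : Finset ℕ // S.card = t + 1} =>
      (2 : ℝ) ^ (-((∑ i ∈ S.1, i : ℕ) : ℤ)) with hF
    set G := fun S : {S : Finset ℕ // S.card = t} =>
      (2 : ℝ) ^ (-((∑ i ∈ S.1, i : ℕ) : ℤ)) with hG
    set g : ℕ → ℝ := fun m => (2 : ℝ) ^ (-((m + t * (m + 1) : ℕ) : ℤ)) with hg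
    have hcomp : ∀ p : ℕ × {T : Finset ℕ // T.card = t},
        F (shiftEquiv t p) = g p.1 * G p.2 := by
      rintro ⟨m, T⟩
      simp only [hF, hg, hG, shiftEquiv_sum]
      rw [← zpow_add₀ (by norm_num : (2:ℝ) ≠ 0)]
      congr 1
      push_cast
      ring
    have hgeq : g = fun m => ((2:ℝ) ^ (-((t:ℤ)+1)))^m * (2:ℝ)^(-(t:ℤ)) := by
      funext m
      rw [hg, ← zpow_natCast ((2:ℝ) ^ (-((t:ℤ)+1))) m, ← zpow_mul,
        ← zpow_add₀ (by norm_num : (2:ℝ) ≠ 0)]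
      push_cast
      ring_nf
    have hr0 : (0:ℝ) ≤ (2:ℝ) ^ (-((t:ℤ)+1)) := by positivity
    have hr1 : (2:ℝ) ^ (-((t:ℤ)+1)) < 1 := by
      rw [zpow_neg]
      rw [inv_lt_one_iff₀]
      right
      have : (1:ℝ) < 2 ^ ((t:ℤ)+1) := by
        have := one_lt_zpow₀ (by norm_num : (1:ℝ) < 2) (by omega : (0:ℤ) < (t:ℤ)+1)
        exact this
      linarith
    have hgs : Summable g := by
      rw [hgeq]
      exact (summable_geometric_of_lt_one hr0 hr1).mul_right _
    have hgsum : ∑' m, g m = (2:ℝ)^(-(t:ℤ)) / (1 - (2:ℝ) ^ (-((t:ℤ)+1))) := by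
      rw [hgeq, tsum_mul_right, tsum_geometric_of_lt_one hr0 hr1]
      rw [div_eq_mul_inv, mul_comm]
    have hFnn : ∀ p : ℕ × {T : Finset ℕ // T.card = t}, 0 ≤ F (shiftEquiv t p) := by
      intro p; rw [hF]; positivity
    have hsum2 : Summable (fun p : ℕ × {T : Finset ℕ // T.card = t} =>
        F (shiftEquiv t p)) := by
      rw [summable_prod_of_nonneg hFnn]
      constructor
      · intro m
        simp only [hcomp]
        exact hs.mul_left _
      · simp only [hcomp]
        have : (fun m => ∑' T, g m * G T) = fun m => g m * ∑' T, G T := by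
          funext m; exact tsum_mul_left
        rw [this]
        exact hgs.mul_right _
    have hFs : Summable F := (Equiv.summable_iff (shiftEquiv t)).mp hsum2
    refine ⟨hFs, ?_⟩
    have := (Equiv.tsum_eq (shiftEquiv t) F).symm
    rw [this, Summable.tsum_prod hsum2]
    simp only [hcomp]
    have h1 : ∀ m : ℕ, ∑' T, g m * G T = g m * ∑' T, G T := fun m => tsum_mul_left
    simp only [h1]
    rw [tsum_mul_right, hgsum, hv]
    -- algebra
    rw [Finset.prod_Icc_succ_top (by omega : 1 ≤ t + 1)]
    have hzp : ∀ k : ℕ, (2:ℝ) ^ (-(k:ℤ)) = ((2:ℝ)^k)⁻¹ := by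
      intro k; rw [zpow_neg, zpow_natCast]
    have h2 : (2:ℝ) ^ (-((t:ℤ)+1)) = ((2:ℝ)^(t+1))⁻¹ := by
      rw [show -((t:ℤ)+1) = -(((t+1 : ℕ)):ℤ) by push_cast; ring, hzp]
    rw [hzp, h2]
    have hprod : ∏ i ∈ Finset.Icc 1 t, ((2:ℝ) ^ i - 1) ≠ 0 := by
      apply Finset.prod_ne_zero_iff.mpr
      intro i hi
      have : (1:ℝ) < 2 ^ i := one_lt_pow₀ (by norm_num) (by
        simp only [Finset.mem_Icc] at hi; omega)
      linarith
    have hp1 : (2:ℝ)^(t+1) - 1 ≠ 0 := by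
      have : (1:ℝ) < 2^(t+1) := one_lt_pow₀ (by norm_num) (by omega)
      linarith
    have hpt : (2:ℝ)^t ≠ 0 := by positivity
    have hpt1 : (2:ℝ)^(t+1) ≠ 0 := by positivity
    have hd : 1 - ((2:ℝ)^(t+1))⁻¹ ≠ 0 := by
      rw [sub_ne_zero]
      intro h
      have : (2:ℝ)^(t+1) = 1 := by
        field_simp at h
        linarith [h]
      have : (1:ℝ) < 2^(t+1) := one_lt_pow₀ (by norm_num) (by omega)
      linarith
    field_simp


theorem stmt_0 (t : ℕ) (ht : 1 ≤ t) :
    ∑' S : {S : Finset ℕ // S.card = t}, (2 : ℝ) ^ (-((∑ i ∈ S.1, i : ℕ) : ℤ))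
      = 2 ^ t / ∏ i ∈ Finset.Icc 1 t, ((2 : ℝ) ^ i - 1) := by
  exact (key t).2
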